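/- The Nielsen elements form a complete system of orthogonal idempotents in R = K[X]/(X^p − X): for all η, μ ∈ ZMod p one has e_η · e_μ = 0 whenever η ≠ μ, e_η · e_η = e_η, and Σ_{η ∈ ZMod p} e_η = 1 in R. -/

import Mathlib

open Polynomial

/-- The Nielsen element `e_η` in `K[X]/(X^p - X)`, for `η ∈ ZMod p`:
the image of `-∑_{n=1}^{p-1} η̄^{-n} X^n` if `η ≠ 0`, and of `1 - X^(p-1)` if
`η = 0`, where `η̄` denotes the image of `η` in `K`. -/
noncomputable def nielsen (K : Type*) [Field K] (p : ℕ) [NeZero p] [CharP K p]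
    (η : ZMod p) : Polynomial K ⧸ Ideal.span {(X : Polynomial K) ^ p - X} :=
  Ideal.Quotient.mk _ <|
    if η = 0 then 1 - X ^ (p - 1)
    else -∑ n ∈ Finset.Icc 1 (p - 1),
      C ((ZMod.castHom (dvd_refl p) K η) ^ n)⁻¹ * X ^ n

section Aux

variable (K : Type*) [Field K] (p : ℕ) [NeZero p] [CharP K p]

/-- `X^p - X = ∏ (X - C (c a))` in `K[X]`. -/
private lemma prod_eq :
    (X : Polynomial K) ^ p - X
      = ∏ a : ZMod p, (X - C (ZMod.castHom (dvd_refl p) K a)) := by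
  have hp : Fact p.Prime := CharP.char_is_prime_of_pos K p
  have hcard : Fintype.card (ZMod p) = p := ZMod.card p
  -- identity over `ZMod p`
  have hroots : ((X : Polynomial (ZMod p)) ^ p - X).roots = Finset.univ.val := by
    have := FiniteField.roots_X_pow_card_sub_X (ZMod p)
    rwa [hcard] at this
  have hmonic : ((X : Polynomial (ZMod p)) ^ p - X).Monic := by
    apply monic_X_pow_sub
    rw [degree_X]
    exact_mod_cast hp.out.one_lt
  have hsplits : Splits ((X : Polynomial (ZMod p)) ^ p - X) := by
    rw [splits_iff_card_roots, hroots]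
    simp [FiniteField.X_pow_card_sub_X_natDegree_eq (ZMod p) hp.out.one_lt, hcard]
  have hZ : (X : Polynomial (ZMod p)) ^ p - X = ∏ a : ZMod p, (X - C a) := by
    conv_lhs => rw [hsplits.eq_prod_roots_of_monic hmonic]
    rw [hroots]
    rfl
  have := congrArg (Polynomial.map (ZMod.castHom (dvd_refl p) K)) hZ
  simpa [Polynomial.map_prod] using this

/-- The evaluation ring hom `R → (ZMod p → K)`. -/
private noncomputable def ev :
    (Polynomial K ⧸ Ideal.span {(X : Polynomial K) ^ p - X}) →+* (ZMod p → K) :=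
  Ideal.Quotient.lift _
    (Pi.ringHom fun a => evalRingHom (ZMod.castHom (dvd_refl p) K a))
    (by
      have hp : Fact p.Prime := CharP.char_is_prime_of_pos K p
      intro g hg
      rw [Ideal.mem_span_singleton] at hg
      obtain ⟨h, rfl⟩ := hg
      funext a
      have key : ((a.cast : K)) ^ p = (a.cast : K) := by
        rw [← ZMod.castHom_apply (h := dvd_refl p), ← map_pow, ZMod.pow_card]
      simp [Pi.ringHom, key, sub_eq_zero])

private lemma ev_mk (g : Polynomial K) (a : ZMod p) :
    ev K p (Ideal.Quotient.mk _ g) a = eval (ZMod.castHom (dvd_refl p) K a) g := rfl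

private lemma ev_injective : Function.Injective (ev K p) := by
  have hp : Fact p.Prime := CharP.char_is_prime_of_pos K p
  rw [injective_iff_map_eq_zero]
  intro x hx
  obtain ⟨g, rfl⟩ := Ideal.Quotient.mk_surjective x
  have hg : ∀ a : ZMod p, eval (ZMod.castHom (dvd_refl p) K a) g = 0 := by
    intro a
    have := congrFun hx a
    simpa [ev_mk] using this
  rcases eq_or_ne g 0 with rfl | hne
  · simp
  · rw [Ideal.Quotient.eq_zero_iff_mem, Ideal.mem_span_singleton]
    set c := ZMod.castHom (dvd_refl p) K with hc
    have hcinj : Function.Injective c := c.injective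
    set M : Multiset K := Finset.univ.val.map c with hM
    have hnodup : M.Nodup := Multiset.Nodup.map hcinj Finset.univ.nodup
    have hle : M ≤ g.roots := by
      rw [Multiset.le_iff_subset hnodup]
      intro b hb
      obtain ⟨a, _, rfl⟩ := Multiset.mem_map.mp hb
      rw [mem_roots hne]
      exact hg a
    have hdvd : (M.map fun b => X - C b).prod ∣ g :=
      (Multiset.prod_X_sub_C_dvd_iff_le_roots hne M).mpr hle
    have heq : (M.map fun b => X - C b).prod = (X : Polynomial K) ^ p - X := by
      rw [hM, Multiset.map_map, prod_eq K p]
      rfl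
    rwa [heq] at hdvd

private lemma ev_nielsen (η a : ZMod p) :
    ev K p (nielsen K p η) a = if a = η then 1 else 0 := by
  haveI hp : Fact p.Prime := CharP.char_is_prime_of_pos K p
  set c := ZMod.castHom (dvd_refl p) K with hc
  rw [nielsen, ev_mk]
  by_cases hη : η = 0
  · subst hη
    rw [if_pos rfl, eval_sub, eval_one, eval_pow, eval_X]
    by_cases ha : a = 0
    · subst ha
      rw [if_pos rfl, map_zero, zero_pow, sub_zero]
      exact Nat.sub_ne_zero_of_lt hp.out.one_lt
    · have h1 : (c a) ^ (p - 1) = 1 := by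
        rw [← map_pow, ZMod.pow_card_sub_one_eq_one ha, map_one]
      rw [h1, sub_self, if_neg ha]
  · rw [if_neg hη]
    have hcη : c η ≠ 0 := fun h => hη (c.injective (by simp [h]))
    rw [eval_neg, eval_finset_sum]
    simp only [eval_mul, eval_pow, eval_C, eval_X]
    have hterm : ∀ n : ℕ, ((c η) ^ n)⁻¹ * (c a) ^ n = (c a * (c η)⁻¹) ^ n := by
      intro n; rw [mul_pow, inv_pow, mul_comm]
    rw [← hc]
    simp only [hterm]
    set t : K := c a * (c η)⁻¹ with ht
    by_cases haη : a = η
    · subst haη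
      have htt : t = 1 := mul_inv_cancel₀ hcη
      rw [if_pos rfl]
      simp only [htt, one_pow]
      rw [Finset.sum_const, Nat.card_Icc, nsmul_eq_mul, mul_one]
      have : ((p - 1 + 1 - 1 : ℕ) : K) = (p : K) - 1 := by
        rw [Nat.add_sub_cancel, Nat.cast_sub (NeZero.one_le), Nat.cast_one]
      rw [this, CharP.cast_eq_zero K p, zero_sub, neg_neg]
    · rw [if_neg haη]
      by_cases ha : a = 0
      · subst ha
        have : ∑ n ∈ Finset.Icc 1 (p - 1), t ^ n = 0 := by
          apply Finset.sum_eq_zero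
          intro n hn
          have hn1 : n ≠ 0 := by
            have := (Finset.mem_Icc.mp hn).1; omega
          rw [ht, map_zero, zero_mul, zero_pow hn1]
        rw [this, neg_zero]
      · have ht1 : t ≠ 1 := by
          intro h
          apply haη
          apply c.injective
          have : c a = c η := by
            rw [ht, mul_inv_eq_one₀ hcη] at h
            exact h
          exact this
        have htp : t ^ p = t := by
          have : t = c (a * η⁻¹) := by rw [map_mul, map_inv₀]
          rw [this, ← map_pow, ZMod.pow_card]
        have hgeom : ∑ n ∈ Finset.range p, t ^ n = 1 := by
          rw [geom_sum_eq ht1, htp, div_self (sub_ne_zero.mpr ht1)]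
        have hIcc : Finset.Icc 1 (p - 1) = Finset.Ico 1 p := by
          rw [← Finset.Ico_add_one_right_eq_Icc]
          congr 1
          have := hp.out.one_lt
          omega
        have hsplit : ∑ n ∈ Finset.range p, t ^ n
            = 1 + ∑ n ∈ Finset.Ico 1 p, t ^ n := by
          rw [Finset.range_eq_Ico, Finset.sum_eq_sum_Ico_succ_bot (NeZero.pos p)]
          simp
        have : ∑ n ∈ Finset.Icc 1 (p - 1), t ^ n = 0 := by
          rw [hIcc]
          have h2 := hsplit.symm.trans hgeom
          linear_combination h2
        rw [this, neg_zero]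

end Aux

/-- The Nielsen elements form a complete system of orthogonal
idempotents in `R = K[X]/(X^p - X)`: for all `η μ : ZMod p`, `e_η * e_μ = 0`
whenever `η ≠ μ`, `e_η * e_η = e_η`, and `∑_η e_η = 1` in `R`. -/
theorem stmt_3 (K : Type*) [Field K] (p : ℕ) [NeZero p] [CharP K p] :
    (∀ η μ : ZMod p, η ≠ μ → nielsen K p η * nielsen K p μ = 0) ∧
    (∀ η : ZMod p, nielsen K p η * nielsen K p η = nielsen K p η) ∧
    (∑ η : ZMod p, nielsen K p η) = 1 := by
  haveI hp : Fact p.Prime := CharP.char_is_prime_of_pos K p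
  have hinj := ev_injective K p
  have hev : ∀ η, ev K p (nielsen K p η) = fun a => if a = η then (1 : K) else 0 :=
    fun η => funext fun a => ev_nielsen K p η a
  refine ⟨?_, ?_, ?_⟩
  · intro η μ hne
    apply hinj
    rw [map_mul, map_zero, hev, hev]
    funext a
    simp only [Pi.mul_apply, Pi.zero_apply]
    by_cases h : a = η
    · subst h
      rw [if_neg hne, mul_zero]
    · rw [if_neg h, zero_mul]
  · intro η
    apply hinj
    rw [map_mul, hev]
    funext a
    by_cases h : a = η <;> simp [h]
  · apply hinj
    rw [map_sum, map_one]
    funext a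
    simp only [Finset.sum_apply, hev, Pi.one_apply]
    rw [Finset.sum_ite_eq Finset.univ a (fun _ => (1 : K)), if_pos (Finset.mem_univ a)]
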